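/- Let A be a finite-dimensional algebra over an algebraically closed field K and Z an irreducible component of mod(A,d) that is a brick component (i.e., the generic value of dim End_A on Z equals 1) and does not contain a dense orbit. Then the generic value of (M,M') ↦ dim Hom_A(M,M') on Z × Z is 0; that is, for generic pairs (M,M') ∈ Z × Z, Hom_A(M,M') = 0. -/

import Mathlib

open TopologicalSpace Topology CategoryTheory

/-- The Zariski topology on a `K`-vector space `W`: the initial topology with
respect to all polynomial functions `W → K` (the `K`-subalgebra of functions
generated by the linear functionals), where `K` carries the cofinite topology
(the Zariski topology of the affine line over an algebraically closed field). -/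
noncomputable def zariskiTopology (K W : Type*) [Field K] [AddCommGroup W] [Module K W] :
    TopologicalSpace W :=
  ⨅ f ∈ (Algebra.adjoin K (Set.range fun (φ : Module.Dual K W) => (φ : W → K)) :
      Subalgebra K (W → K)),
    TopologicalSpace.induced (fun w => CofiniteTopology.of (f w)) inferInstance

variable (K A : Type) [Field K] [Ring A] [Algebra K A]

/-- The variety `mod(A,d)` of `d`-dimensional `A`-module structures: the set of
`K`-algebra homomorphisms `A → M_d(K)`. -/
abbrev ModVar (d : ℕ) := A →ₐ[K] Matrix (Fin d) (Fin d) K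

/-- `mod(A,d)` carries the (subspace) Zariski topology, induced from the
Zariski topology of the affine space of linear maps `A → M_d(K)`. -/
noncomputable instance (d : ℕ) : TopologicalSpace (ModVar K A d) :=
  TopologicalSpace.induced (fun M : ModVar K A d => M.toLinearMap)
    (zariskiTopology K (A →ₗ[K] Matrix (Fin d) (Fin d) K))

/-- The `GL_d(K)`-orbit of a point of `mod(A,d)` under the conjugation action:
the set of module structures isomorphic to `M`. -/
def orbitSet {d : ℕ} (M : ModVar K A d) : Set (ModVar K A d) :=
  {M' | ∃ g : (Matrix (Fin d) (Fin d) K)ˣ,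
    ∀ a : A, M' a = (↑g⁻¹ : Matrix (Fin d) (Fin d) K) * M a * (↑g : Matrix (Fin d) (Fin d) K)}

/-- The space `Hom_A(M, M')` of `A`-module homomorphisms between the module
structures corresponding to points `M ∈ mod(A,d)`, `M' ∈ mod(A,d')`: the
`K`-linear maps intertwining the two actions. -/
def homSpace {d d' : ℕ} (M : ModVar K A d) (M' : ModVar K A d') :
    Submodule K ((Fin d → K) →ₗ[K] (Fin d' → K)) where
  carrier := {f | ∀ a : A,
    f.comp (Matrix.mulVecLin (M a)) = (Matrix.mulVecLin (M' a)).comp f}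
  add_mem' := by
    intro f g hf hg
    intro a
    simp only [Set.mem_setOf_eq] at hf hg
    rw [LinearMap.add_comp, LinearMap.comp_add, hf a, hg a]
  zero_mem' := by
    intro a
    rw [LinearMap.zero_comp, LinearMap.comp_zero]
  smul_mem' := by
    intro c f hf
    intro a
    simp only [Set.mem_setOf_eq] at hf
    rw [LinearMap.smul_comp, LinearMap.comp_smul, hf a]

set_option linter.unusedSectionVars false

namespace BrickAux

noncomputable abbrev polyAlg (K W : Type*) [Field K] [AddCommGroup W] [Module K W] :
    Subalgebra K (W → K) :=
  Algebra.adjoin K (Set.range fun (φ : Module.Dual K W) => (φ : W → K))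

variable {K W : Type*} [Field K] [AddCommGroup W] [Module K W]

lemma zariski_le (q : W → K) (hq : q ∈ polyAlg K W) :
    zariskiTopology K W ≤
      TopologicalSpace.induced (fun w => CofiniteTopology.of (q w)) inferInstance := by
  rw [zariskiTopology]
  exact iInf₂_le q hq

lemma isClosed_zero_set {q : W → K} (hq : q ∈ polyAlg K W) :
    IsClosed[zariskiTopology K W] {w | q w = 0} := by
  letI tc : TopologicalSpace W :=
    TopologicalSpace.induced (fun w : W => CofiniteTopology.of (q w)) inferInstance
  have h1 : IsClosed[tc] {w | q w = 0} := by
    have : {w : W | q w = 0} =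
        (fun w : W => CofiniteTopology.of (q w)) ⁻¹' {CofiniteTopology.of (0 : K)} := by
      ext w
      simp only [Set.mem_setOf_eq, Set.mem_preimage, Set.mem_singleton_iff]
      exact ⟨fun h => by rw [h], fun h => CofiniteTopology.of.injective h⟩
    rw [this]
    exact IsClosed.preimage continuous_induced_dom
      (CofiniteTopology.isClosed_iff.2 (Or.inr (Set.finite_singleton _)))
  exact h1.mono (zariski_le q hq)

lemma zariski_eq_iInf_subtype : zariskiTopology K W =
    ⨅ σ : (polyAlg K W), TopologicalSpace.induced
      (fun w => CofiniteTopology.of ((σ : W → K) w)) inferInstance := by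
  apply le_antisymm
  · exact le_iInf fun σ => zariski_le σ.1 σ.2
  · rw [zariskiTopology]
    exact le_iInf₂ fun f hf => iInf_le _ (⟨f, hf⟩ : polyAlg K W)

/-- Membership in a Zariski-open set is implied by finitely many conditions of the form
`q w ∉ F` with `q` polynomial and `F` finite. -/
lemma mem_open_iff_finite_conditions {U : Set W} {w₀ : W}
    (hU : IsOpen[zariskiTopology K W] U) (hw : w₀ ∈ U) :
    ∃ (s : Finset (polyAlg K W)) (F : (polyAlg K W) → Set K),
      (∀ σ ∈ s, (F σ).Finite ∧ (σ : W → K) w₀ ∉ F σ) ∧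
      ∀ w : W, (∀ σ ∈ s, (σ : W → K) w ∉ F σ) → w ∈ U := by
  classical
  have hnhds : U ∈ @nhds W (zariskiTopology K W) w₀ := by
    letI := zariskiTopology K W
    exact IsOpen.mem_nhds hU hw
  rw [zariski_eq_iInf_subtype, nhds_iInf] at hnhds
  rw [Filter.mem_iInf] at hnhds
  obtain ⟨I, hIfin, V, hV, hUeq⟩ := hnhds
  have hVmem : ∀ i : I, ∃ t : Set (CofiniteTopology K),
      (CofiniteTopology.of ((i.1 : W → K) w₀) ∈ t ∧ tᶜ.Finite) ∧
      (fun w : W => CofiniteTopology.of ((i.1 : W → K) w)) ⁻¹' t ⊆ V i := by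
    intro i
    have := hV i
    rw [nhds_induced, Filter.mem_comap] at this
    obtain ⟨t, ht, hsub⟩ := this
    exact ⟨t, CofiniteTopology.mem_nhds_iff.1 ht, hsub⟩
  choose t ht hsub using hVmem
  refine ⟨hIfin.toFinset, fun σ => if h : σ ∈ I then
      CofiniteTopology.of ⁻¹' (t ⟨σ, h⟩)ᶜ else ∅, ?_, ?_⟩
  · intro σ hσ
    rw [Set.Finite.mem_toFinset] at hσ
    simp only [dif_pos hσ]
    constructor
    · exact Set.Finite.preimage (Set.injOn_of_injective CofiniteTopology.of.injective)
        ((ht ⟨σ, hσ⟩).2)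
    · simp only [Set.mem_preimage, Set.mem_compl_iff, not_not]
      exact (ht ⟨σ, hσ⟩).1
  · intro w hw'
    rw [hUeq]
    refine Set.mem_iInter.2 fun i => ?_
    have hcond := hw' i.1 (hIfin.mem_toFinset.2 i.2)
    simp only [dif_pos i.2, Set.mem_preimage, Set.mem_compl_iff, not_not,
      Subtype.coe_eta] at hcond
    exact hsub i hcond



section Cofactor

variable {K : Type*} [Field K] {ι : Type*} [Fintype ι] {e : ℕ}

/-- Square matrix whose first row is `y` and whose remaining rows are the rows of `Q`
selected by `r`. -/
def rowsMat (Q : Matrix ι (Fin (e+1)) K) (r : Fin e → ι) (y : Fin (e+1) → K) :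
    Matrix (Fin (e+1)) (Fin (e+1)) K :=
  Matrix.of (Fin.cons y (fun i => Q (r i)))

/-- The "cofactor vector" of the rows of `Q` selected by `r`. -/
def cofVec (Q : Matrix ι (Fin (e+1)) K) (r : Fin e → ι) : Fin (e+1) → K :=
  fun j => (rowsMat Q r (Pi.single j 1)).det

lemma rowsMat_eq_updateRow (Q : Matrix ι (Fin (e+1)) K) (r : Fin e → ι)
    (y y' : Fin (e+1) → K) :
    rowsMat Q r y = (rowsMat Q r y').updateRow 0 y := by
  ext i j
  refine Fin.cases ?_ (fun i => ?_) i
  · simp [rowsMat, Matrix.updateRow_apply]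
  · simp [rowsMat, Matrix.updateRow_apply, Fin.succ_ne_zero]

/-- Multilinearity of the determinant in the first row, in cofactor form. -/
lemma det_rowsMat (Q : Matrix ι (Fin (e+1)) K) (r : Fin e → ι) (y : Fin (e+1) → K) :
    (rowsMat Q r y).det = ∑ j, y j * cofVec Q r j := by
  have hy : y = ∑ j, y j • (Pi.single j (1:K) : Fin (e+1) → K) := by
    funext k
    rw [Finset.sum_apply]
    simp [Pi.single_apply, Finset.sum_ite_eq']
  have h2 : ∀ (M : Matrix (Fin (e+1)) (Fin (e+1)) K) (z : Fin (e+1) → K),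
      (M.updateRow 0 z).det = ∑ j, z j * (M.updateRow 0 (Pi.single j 1)).det := by
    intro M z
    have hz : z = ∑ j, z j • (Pi.single j (1:K) : Fin (e+1) → K) := by
      funext k
      rw [Finset.sum_apply]
      simp [Pi.single_apply, Finset.sum_ite_eq']
    conv_lhs => rw [hz]
    have hupd : ∀ w : Fin (e+1) → K, M.updateRow 0 w = Matrix.of (Function.update M 0 w) := by
      intro w; rfl
    rw [hupd]
    have hsum := (Matrix.detRowAlternating (R := K) (n := Fin (e+1))).map_update_sum
      (t := Finset.univ) (i := (0 : Fin (e+1)))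
      (g := fun j => z j • (Pi.single j (1:K) : Fin (e+1) → K)) M
    show Matrix.detRowAlternating (Function.update M 0
      (∑ j, z j • (Pi.single j (1:K) : Fin (e+1) → K))) = _
    rw [hsum]
    refine Finset.sum_congr rfl fun j _ => ?_
    have hsmul := (Matrix.detRowAlternating (R := K)
      (n := Fin (e+1))).map_update_smul M 0 (z j) (Pi.single j (1:K))
    rw [hsmul, smul_eq_mul]
    rfl
  have h3 : rowsMat Q r y = (rowsMat Q r y).updateRow 0 y := rowsMat_eq_updateRow Q r y y
  rw [h3, h2]
  refine Finset.sum_congr rfl fun j _ => ?_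
  rw [← rowsMat_eq_updateRow]
  rfl

lemma mulVec_cofVec_eq_zero (Q : Matrix ι (Fin (e+1)) K) (r : Fin e → ι)
    (hx : ∃ x, x ≠ 0 ∧ Q.mulVec x = 0) :
    Q.mulVec (cofVec Q r) = 0 := by
  obtain ⟨x, hx0, hxQ⟩ := hx
  funext i
  rw [Pi.zero_apply]
  have h1 : (Q.mulVec (cofVec Q r)) i = (rowsMat Q r (Q i)).det := by
    rw [det_rowsMat]
    rfl
  rw [h1]
  rw [← Matrix.exists_mulVec_eq_zero_iff]
  refine ⟨x, hx0, ?_⟩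
  funext k
  refine Fin.cases ?_ (fun k => ?_) k
  · show (Matrix.mulVec (rowsMat Q r (Q i)) x) 0 = 0
    have : (rowsMat Q r (Q i)) 0 = Q i := rfl
    show Finset.univ.sum (fun j => (rowsMat Q r (Q i)) 0 j * x j) = 0
    have := congrFun hxQ i
    simpa [Matrix.mulVec, dotProduct, rowsMat] using this
  · show Finset.univ.sum (fun j => (rowsMat Q r (Q i)) k.succ j * x j) = 0
    have := congrFun hxQ (r k)
    simpa [Matrix.mulVec, dotProduct, rowsMat] using this

lemma det_ne_zero_of_rows_independent {m : ℕ} {M : Matrix (Fin m) (Fin m) K}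
    (h : LinearIndependent K (fun i => M i)) : M.det ≠ 0 := by
  intro hdet
  obtain ⟨v, hv0, hv⟩ := Matrix.exists_vecMul_eq_zero_iff.2 hdet
  apply hv0
  have hsum : ∀ j, (∑ i, v i • M i) j = 0 := by
    intro j
    have := congrFun hv j
    simpa [Matrix.vecMul, dotProduct, Finset.sum_apply] using this
  have : ∑ i, v i • M i = 0 := funext hsum
  have := Fintype.linearIndependent_iff.1 h v this
  funext i; exact this i

lemma exists_cofVec_ne_zero (Q : Matrix ι (Fin (e+1)) K) (hrank : Q.rank = e) :
    ∃ (r : Fin e → ι) (j : Fin (e+1)), cofVec Q r j ≠ 0 := by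
  classical
  have hrow : Module.finrank K (Submodule.span K (Set.range Q)) = e := by
    exact (Matrix.rank_eq_finrank_span_row Q).symm.trans hrank
  obtain ⟨b, hbsub, hbspan, hbind⟩ := exists_linearIndependent K (Set.range Q)
  have hbfin : b.Finite := hbind.setFinite
  letI := hbfin.fintype
  have hcard : b.toFinset.card = e := by
    rw [← finrank_span_set_eq_card hbind, hbspan, hrow]
  have hcard' : Fintype.card b = e := by rw [← Set.toFinset_card, hcard]
  let eb : Fin e ≃ b := (Fintype.equivFinOfCardEq hcard').symm
  have hchoice : ∀ i : Fin e, ∃ idx : ι, Q idx = (eb i : Fin (e+1) → K) :=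
    fun i => hbsub (eb i).2
  choose r hr using hchoice
  have hind : LinearIndependent K (fun i : Fin e => Q (r i)) := by
    have heq : (fun i : Fin e => Q (r i)) = (fun x : b => (x : Fin (e+1) → K)) ∘ eb := by
      funext i; rw [hr]; rfl
    rw [heq]
    exact hbind.comp eb eb.injective
  have hspan_ne : Submodule.span K (Set.range fun i : Fin e => Q (r i)) ≠ ⊤ := by
    intro htop
    have h1 : Module.finrank K (Submodule.span K (Set.range fun i : Fin e => Q (r i))) = e := by
      simpa using finrank_span_eq_card hind
    rw [htop] at h1
    rw [finrank_top] at h1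
    rw [Module.finrank_pi] at h1
    simp at h1
  obtain ⟨y, hy⟩ : ∃ y, y ∉ Submodule.span K (Set.range fun i : Fin e => Q (r i)) := by
    by_contra h
    push_neg at h
    exact hspan_ne (eq_top_iff.2 fun z _ => h z)
  have hind2 : LinearIndependent K (Fin.cons y (fun i : Fin e => Q (r i)) :
      Fin (e+1) → (Fin (e+1) → K)) :=
    linearIndependent_fin_cons.2 ⟨hind, hy⟩
  have hdet : (rowsMat Q r y).det ≠ 0 := by
    apply det_ne_zero_of_rows_independent
    exact hind2
  rw [det_rowsMat] at hdet
  by_contra hall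
  push_neg at hall
  apply hdet
  refine Finset.sum_eq_zero fun j _ => ?_
  rw [hall r j, mul_zero]

end Cofactor




section HomMat

variable {K A : Type} [Field K] [Ring A] [Algebra K A] [FiniteDimensional K A]
variable {d e : ℕ}

/-- reshape a vector into a `d × d` matrix -/
def unvecL (he : d * d = e + 1) : (Fin (e+1) → K) →ₗ[K] Matrix (Fin d) (Fin d) K where
  toFun x := Matrix.of fun s t => x (finCongr he (finProdFinEquiv (s, t)))
  map_add' x y := by ext s t; simp
  map_smul' c x := by ext s t; simp

def vecL (he : d * d = e + 1) : Matrix (Fin d) (Fin d) K →ₗ[K] (Fin (e+1) → K) where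
  toFun F j := F (finProdFinEquiv.symm ((finCongr he).symm j)).1
      (finProdFinEquiv.symm ((finCongr he).symm j)).2
  map_add' x y := by funext j; simp
  map_smul' c x := by funext j; simp

lemma unvec_vec (he : d * d = e + 1) (F : Matrix (Fin d) (Fin d) K) :
    unvecL he (vecL he F) = F := by
  ext s t
  show F (finProdFinEquiv.symm ((finCongr he).symm (finCongr he (finProdFinEquiv (s, t))))).1
      (finProdFinEquiv.symm ((finCongr he).symm (finCongr he (finProdFinEquiv (s, t))))).2 = F s t
  rw [Equiv.symm_apply_apply, Equiv.symm_apply_apply]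

lemma vec_unvec (he : d * d = e + 1) (x : Fin (e+1) → K) :
    vecL he (unvecL he x) = x := by
  funext j
  show x (finCongr he (finProdFinEquiv ((finProdFinEquiv.symm ((finCongr he).symm j)).1,
      (finProdFinEquiv.symm ((finCongr he).symm j)).2))) = x j
  rw [Prod.mk.eta, Equiv.apply_symm_apply, Equiv.apply_symm_apply]

/-- The reshaping linear equivalence. -/
noncomputable def unvecE (he : d * d = e + 1) :
    (Fin (e+1) → K) ≃ₗ[K] Matrix (Fin d) (Fin d) K :=
  LinearEquiv.ofLinear (unvecL he) (vecL he)
    (LinearMap.ext fun F => unvec_vec he F)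
    (LinearMap.ext fun x => vec_unvec he x)

/-- The intertwining operator whose kernel is (the vectorization of) the space of
matrices `F` with `F * L a = R a * F` for all `a`. -/
noncomputable def TT (he : d * d = e + 1)
    (L R : A →ₗ[K] Matrix (Fin d) (Fin d) K) :
    (Fin (e+1) → K) →ₗ[K] ((Fin (Module.finrank K A) × Fin d × Fin d) → K) where
  toFun x p := (unvecL he x * L (Module.finBasis K A p.1)
      - R (Module.finBasis K A p.1) * unvecL he x) p.2.1 p.2.2
  map_add' x y := by
    funext p
    simp only [map_add, Matrix.add_mul, Matrix.mul_add, Pi.add_apply, Matrix.sub_apply,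
      Matrix.add_apply]
    ring
  map_smul' c x := by
    funext p
    simp only [map_smul, Matrix.smul_mul, Matrix.mul_smul, Pi.smul_apply, Matrix.sub_apply,
      Matrix.smul_apply, RingHom.id_apply, smul_eq_mul]
    ring

lemma TT_eq_zero_iff (he : d * d = e + 1) (L R : A →ₗ[K] Matrix (Fin d) (Fin d) K)
    (x : Fin (e+1) → K) :
    TT he L R x = 0 ↔ ∀ a : A, unvecL he x * L a = R a * unvecL he x := by
  constructor
  · intro h a
    have hbasis : ∀ i, unvecL he x * L (Module.finBasis K A i)
        = R (Module.finBasis K A i) * unvecL he x := by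
      intro i
      ext k l
      have := congrFun h (i, k, l)
      simp only [TT, LinearMap.coe_mk, AddHom.coe_mk, Pi.zero_apply] at this
      have := sub_eq_zero.1 (by simpa [Matrix.sub_apply] using this)
      exact this
    have h1 : ((LinearMap.mulLeft K (unvecL he x)).comp L)
        = ((LinearMap.mulRight K (unvecL he x)).comp R) := by
      apply Module.Basis.ext (Module.finBasis K A)
      intro i
      simpa [LinearMap.mulLeft_apply, LinearMap.mulRight_apply] using hbasis i
    have := LinearMap.congr_fun h1 a
    simpa [LinearMap.mulLeft_apply, LinearMap.mulRight_apply] using this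
  · intro h
    funext p
    simp [TT, h (Module.finBasis K A p.1)]

variable (K A) in
lemma mem_homSpace_iff_matrix {d : ℕ} (B M : ModVar K A d) (F : Matrix (Fin d) (Fin d) K) :
    Matrix.mulVecLin F ∈ homSpace K A B M ↔ ∀ a : A, F * B a = M a * F := by
  constructor
  · intro h a
    have := h a
    rw [← Matrix.mulVecLin_mul, ← Matrix.mulVecLin_mul] at this
    exact Matrix.toLin'.injective this
  · intro h a
    rw [← Matrix.mulVecLin_mul, ← Matrix.mulVecLin_mul, h a]

/-- The vectorized kernel computes the hom space. -/
lemma homSpace_eq_map (he : d * d = e + 1) (B M : ModVar K A d) :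
    homSpace K A B M = Submodule.map ((unvecE he).trans Matrix.toLin').toLinearMap
      (LinearMap.ker (TT he B.toLinearMap M.toLinearMap)) := by
  ext f
  constructor
  · intro hf
    refine ⟨vecL he (LinearMap.toMatrix' f), ?_, ?_⟩
    · simp only [SetLike.mem_coe]
      rw [LinearMap.mem_ker, TT_eq_zero_iff]
      intro a
      have : unvecL he (vecL he (LinearMap.toMatrix' f)) = LinearMap.toMatrix' f :=
        unvec_vec he _
      rw [this]
      have hmem : Matrix.mulVecLin (LinearMap.toMatrix' f) ∈ homSpace K A B M := by
        have : Matrix.mulVecLin (LinearMap.toMatrix' f) = f := Matrix.toLin'_toMatrix' f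
        rw [this]; exact hf
      exact (mem_homSpace_iff_matrix K A B M _).1 hmem a
    · show Matrix.toLin' (unvecE he (vecL he (LinearMap.toMatrix' f))) = f
      show Matrix.toLin' (unvecL he (vecL he (LinearMap.toMatrix' f))) = f
      rw [unvec_vec he]
      exact Matrix.toLin'_toMatrix' f
  · rintro ⟨x, hx, rfl⟩
    simp only [SetLike.mem_coe] at hx
    rw [LinearMap.mem_ker, TT_eq_zero_iff] at hx
    show Matrix.toLin' (unvecE he x) ∈ homSpace K A B M
    show Matrix.mulVecLin (unvecL he x) ∈ homSpace K A B M
    exact (mem_homSpace_iff_matrix K A B M _).2 hx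

lemma homSpace_finrank_eq (he : d * d = e + 1) (B M : ModVar K A d) :
    Module.finrank K (homSpace K A B M)
      = Module.finrank K (LinearMap.ker (TT he B.toLinearMap M.toLinearMap)) := by
  rw [homSpace_eq_map he B M, LinearEquiv.finrank_map_eq]

/-- the matrix of the intertwining operator -/
noncomputable def QQ (he : d * d = e + 1) (L R : A →ₗ[K] Matrix (Fin d) (Fin d) K) :
    Matrix (Fin (Module.finrank K A) × Fin d × Fin d) (Fin (e+1)) K :=
  LinearMap.toMatrix' (TT he L R)

lemma QQ_mulVec (he : d * d = e + 1) (L R : A →ₗ[K] Matrix (Fin d) (Fin d) K)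
    (x : Fin (e+1) → K) : (QQ he L R).mulVec x = TT he L R x := by
  have : (QQ he L R).mulVec x = Matrix.toLin' (QQ he L R) x := rfl
  rw [this, QQ, Matrix.toLin'_toMatrix']

lemma QQ_rank (he : d * d = e + 1) (L R : A →ₗ[K] Matrix (Fin d) (Fin d) K)
    (hker : Module.finrank K (LinearMap.ker (TT he L R)) = 1) :
    (QQ he L R).rank = e := by
  have hmv : (QQ he L R).mulVecLin = TT he L R := by
    show Matrix.toLin' (QQ he L R) = TT he L R
    rw [QQ, Matrix.toLin'_toMatrix']
  have h1 := LinearMap.finrank_range_add_finrank_ker (TT he L R)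
  rw [hker] at h1
  have h2 : Module.finrank K (Fin (e+1) → K) = e + 1 := by
    rw [Module.finrank_pi, Fintype.card_fin]
  rw [h2] at h1
  rw [Matrix.rank, hmv]
  omega

end HomMat

section PolyMem

variable {K A : Type} [Field K] [Ring A] [Algebra K A] [FiniteDimensional K A] {d e : ℕ}

def entryDual (a : A) (k l : Fin d) : Module.Dual K (A →ₗ[K] Matrix (Fin d) (Fin d) K) where
  toFun w := w a k l
  map_add' x y := by simp
  map_smul' c x := by simp

lemma entry_mem (a : A) (k l : Fin d) :
    (fun w : A →ₗ[K] Matrix (Fin d) (Fin d) K => w a k l)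
      ∈ polyAlg K (A →ₗ[K] Matrix (Fin d) (Fin d) K) :=
  Algebra.subset_adjoin ⟨entryDual a k l, rfl⟩

lemma const_mem (c : K) : (fun _ : A →ₗ[K] Matrix (Fin d) (Fin d) K => c)
    ∈ polyAlg K (A →ₗ[K] Matrix (Fin d) (Fin d) K) := by
  have : (fun _ : A →ₗ[K] Matrix (Fin d) (Fin d) K => c)
      = algebraMap K ((A →ₗ[K] Matrix (Fin d) (Fin d) K) → K) c := rfl
  rw [this]; exact Subalgebra.algebraMap_mem _ c

lemma det_mem_polyAlg {m : Type*} [Fintype m] [DecidableEq m]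
    (Mf : m → m → ((A →ₗ[K] Matrix (Fin d) (Fin d) K) → K))
    (h : ∀ i j, Mf i j ∈ polyAlg K (A →ₗ[K] Matrix (Fin d) (Fin d) K)) :
    (fun w : A →ₗ[K] Matrix (Fin d) (Fin d) K => (Matrix.of fun i j => Mf i j w).det)
      ∈ polyAlg K (A →ₗ[K] Matrix (Fin d) (Fin d) K) := by
  classical
  have heq : (fun w : A →ₗ[K] Matrix (Fin d) (Fin d) K => (Matrix.of fun i j => Mf i j w).det)
      = ∑ σ : Equiv.Perm m, Equiv.Perm.sign σ • ∏ i, Mf (σ i) i := by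
    funext w
    rw [Matrix.det_apply]
    rw [Finset.sum_apply]
    refine Finset.sum_congr rfl fun σ _ => ?_
    rw [Pi.smul_apply, Finset.prod_apply]
    rfl
  rw [heq]
  refine Subalgebra.sum_mem _ fun σ _ => ?_
  have hprod : (∏ i, Mf (σ i) i) ∈ polyAlg K (A →ₗ[K] Matrix (Fin d) (Fin d) K) :=
    Subalgebra.prod_mem _ fun i _ => h _ _
  obtain h1 | h1 := Int.units_eq_one_or (Equiv.Perm.sign σ)
  · rw [h1]; simpa [Units.smul_def] using hprod
  · rw [h1]
    have : ((-1 : ℤˣ) • ∏ i, Mf (σ i) i) = -(∏ i, Mf (σ i) i) := by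
      simp [Units.smul_def]
    rw [this]
    exact Subalgebra.neg_mem _ hprod

lemma QQ_left_entry_mem (he : d * d = e + 1) (B : ModVar K A d)
    (p : Fin (Module.finrank K A) × Fin d × Fin d) (j : Fin (e+1)) :
    (fun w : A →ₗ[K] Matrix (Fin d) (Fin d) K => QQ he B.toLinearMap w p j)
      ∈ polyAlg K (A →ₗ[K] Matrix (Fin d) (Fin d) K) := by
  classical
  set Ej : Matrix (Fin d) (Fin d) K :=
    unvecL he (fun j' => if j' = j then 1 else 0) with hEj
  have hentry : ∀ w : A →ₗ[K] Matrix (Fin d) (Fin d) K, QQ he B.toLinearMap w p j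
      = (Ej * B (Module.finBasis K A p.1)) p.2.1 p.2.2
        - ∑ s, (Ej s p.2.2) * w (Module.finBasis K A p.1) p.2.1 s := by
    intro w
    rw [QQ, LinearMap.toMatrix'_apply]
    simp only [TT, LinearMap.coe_mk, AddHom.coe_mk, Matrix.sub_apply,
      AlgHom.toLinearMap_apply]
    have h2 : (w (Module.finBasis K A p.1) * Ej) p.2.1 p.2.2
        = ∑ s, (Ej s p.2.2) * w (Module.finBasis K A p.1) p.2.1 s := by
      rw [Matrix.mul_apply]
      exact Finset.sum_congr rfl fun s _ => mul_comm _ _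
    rw [← h2]
    have hEj' : Ej = unvecL he (Pi.single j 1) := by
      rw [hEj]; congr 1; funext j'; simp [Pi.single_apply]
    rw [hEj']
  have heq : (fun w : A →ₗ[K] Matrix (Fin d) (Fin d) K => QQ he B.toLinearMap w p j)
      = fun w => (Ej * B (Module.finBasis K A p.1)) p.2.1 p.2.2
        - ∑ s, (Ej s p.2.2) * w (Module.finBasis K A p.1) p.2.1 s := funext hentry
  rw [heq]
  have hsum : (fun w : A →ₗ[K] Matrix (Fin d) (Fin d) K =>
      ∑ s, (Ej s p.2.2) * w (Module.finBasis K A p.1) p.2.1 s)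
      ∈ polyAlg K (A →ₗ[K] Matrix (Fin d) (Fin d) K) := by
    have h3 : (fun w : A →ₗ[K] Matrix (Fin d) (Fin d) K =>
        ∑ s, (Ej s p.2.2) * w (Module.finBasis K A p.1) p.2.1 s)
        = ∑ s, fun w : A →ₗ[K] Matrix (Fin d) (Fin d) K =>
            (Ej s p.2.2) * w (Module.finBasis K A p.1) p.2.1 s := by
      funext w
      rw [Finset.sum_apply]
    rw [h3]
    exact Subalgebra.sum_mem _ fun s _ =>
      Subalgebra.mul_mem _ (const_mem _) (entry_mem _ _ _)
  exact Subalgebra.sub_mem _ (const_mem _) hsum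

lemma QQ_right_entry_mem (he : d * d = e + 1) (B : ModVar K A d)
    (p : Fin (Module.finrank K A) × Fin d × Fin d) (j : Fin (e+1)) :
    (fun w : A →ₗ[K] Matrix (Fin d) (Fin d) K => QQ he w B.toLinearMap p j)
      ∈ polyAlg K (A →ₗ[K] Matrix (Fin d) (Fin d) K) := by
  classical
  set Ej : Matrix (Fin d) (Fin d) K :=
    unvecL he (fun j' => if j' = j then 1 else 0) with hEj
  have hentry : ∀ w : A →ₗ[K] Matrix (Fin d) (Fin d) K, QQ he w B.toLinearMap p j
      = (∑ s, (Ej p.2.1 s) * w (Module.finBasis K A p.1) s p.2.2)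
        - (B (Module.finBasis K A p.1) * Ej) p.2.1 p.2.2 := by
    intro w
    rw [QQ, LinearMap.toMatrix'_apply]
    simp only [TT, LinearMap.coe_mk, AddHom.coe_mk, Matrix.sub_apply,
      AlgHom.toLinearMap_apply]
    have h2 : (Ej * w (Module.finBasis K A p.1)) p.2.1 p.2.2
        = ∑ s, (Ej p.2.1 s) * w (Module.finBasis K A p.1) s p.2.2 :=
      Matrix.mul_apply
    rw [← h2]
    have hEj' : Ej = unvecL he (Pi.single j 1) := by
      rw [hEj]; congr 1; funext j'; simp [Pi.single_apply]
    rw [hEj']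
  have heq : (fun w : A →ₗ[K] Matrix (Fin d) (Fin d) K => QQ he w B.toLinearMap p j)
      = fun w => (∑ s, (Ej p.2.1 s) * w (Module.finBasis K A p.1) s p.2.2)
        - (B (Module.finBasis K A p.1) * Ej) p.2.1 p.2.2 := funext hentry
  rw [heq]
  have hsum : (fun w : A →ₗ[K] Matrix (Fin d) (Fin d) K =>
      ∑ s, (Ej p.2.1 s) * w (Module.finBasis K A p.1) s p.2.2)
      ∈ polyAlg K (A →ₗ[K] Matrix (Fin d) (Fin d) K) := by
    have h3 : (fun w : A →ₗ[K] Matrix (Fin d) (Fin d) K =>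
        ∑ s, (Ej p.2.1 s) * w (Module.finBasis K A p.1) s p.2.2)
        = ∑ s, fun w : A →ₗ[K] Matrix (Fin d) (Fin d) K =>
            (Ej p.2.1 s) * w (Module.finBasis K A p.1) s p.2.2 := by
      funext w
      rw [Finset.sum_apply]
    rw [h3]
    exact Subalgebra.sum_mem _ fun s _ =>
      Subalgebra.mul_mem _ (const_mem _) (entry_mem _ _ _)
  exact Subalgebra.sub_mem _ hsum (const_mem _)

lemma cof_mem {ι' : Type*} [Fintype ι']
    (Qf : ι' → Fin (e+1) → ((A →ₗ[K] Matrix (Fin d) (Fin d) K) → K))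
    (h : ∀ p j, Qf p j ∈ polyAlg K (A →ₗ[K] Matrix (Fin d) (Fin d) K))
    (r : Fin e → ι') (j : Fin (e+1)) :
    (fun w : A →ₗ[K] Matrix (Fin d) (Fin d) K =>
      cofVec (Matrix.of fun p q => Qf p q w) r j)
      ∈ polyAlg K (A →ₗ[K] Matrix (Fin d) (Fin d) K) := by
  classical
  set Mf : Fin (e+1) → Fin (e+1) → ((A →ₗ[K] Matrix (Fin d) (Fin d) K) → K) :=
    fun p q => Fin.cases (motive := fun _ => (A →ₗ[K] Matrix (Fin d) (Fin d) K) → K)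
      (fun _ => (Pi.single j (1:K) : Fin (e+1) → K) q) (fun i => Qf (r i) q) p with hMf
  have heq : (fun w : A →ₗ[K] Matrix (Fin d) (Fin d) K =>
      cofVec (Matrix.of fun p q => Qf p q w) r j)
      = fun w => (Matrix.of fun p q => Mf p q w).det := by
    funext w
    rw [cofVec]
    congr 1
    ext p q
    refine Fin.cases ?_ (fun i => ?_) p
    · simp only [hMf, Matrix.of_apply, rowsMat, Fin.cases_zero, Fin.cons_zero]
    · simp only [hMf, Matrix.of_apply, rowsMat, Fin.cases_succ, Fin.cons_succ]
  rw [heq]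
  refine det_mem_polyAlg Mf fun p q => ?_
  refine Fin.cases ?_ (fun i => ?_) p
  · simpa only [hMf, Fin.cases_zero] using const_mem (K := K) (A := A) (d := d)
      ((Pi.single j (1:K) : Fin (e+1) → K) q)
  · simpa only [hMf, Fin.cases_succ] using h (r i) q

lemma commuting_scalar (hd : 0 < d) (B : ModVar K A d)
    (hB : Module.finrank K (homSpace K A B B) = 1)
    (F : Matrix (Fin d) (Fin d) K) (hF : ∀ a : A, F * B a = B a * F) :
    ∃ c : K, F = c • (1 : Matrix (Fin d) (Fin d) K) := by
  have hidmem : Matrix.mulVecLin (1 : Matrix (Fin d) (Fin d) K) ∈ homSpace K A B B :=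
    (mem_homSpace_iff_matrix K A B B 1).2 (fun a => by rw [one_mul, mul_one])
  have hFmem : Matrix.mulVecLin F ∈ homSpace K A B B :=
    (mem_homSpace_iff_matrix K A B B F).2 hF
  set v : homSpace K A B B := ⟨_, hidmem⟩ with hv
  have hv0 : v ≠ 0 := by
    intro h0
    have h1 : Matrix.mulVecLin (1 : Matrix (Fin d) (Fin d) K)
        = (0 : (Fin d → K) →ₗ[K] (Fin d → K)) := congrArg Subtype.val h0
    rw [Matrix.mulVecLin_one] at h1
    have h2 := congrFun (LinearMap.congr_fun h1 (Pi.single ⟨0, hd⟩ (1:K))) ⟨0, hd⟩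
    simp at h2
  obtain ⟨c, hc⟩ := (finrank_eq_one_iff_of_nonzero' v hv0).1 hB ⟨_, hFmem⟩
  refine ⟨c, ?_⟩
  have h3 : c • Matrix.mulVecLin (1 : Matrix (Fin d) (Fin d) K) = Matrix.mulVecLin F :=
    congrArg Subtype.val hc
  have h4 : Matrix.toLin' (c • (1 : Matrix (Fin d) (Fin d) K)) = Matrix.toLin' F := by
    rw [map_smul, Matrix.toLin'_apply', Matrix.toLin'_apply']
    exact h3
  exact (Matrix.toLin'.injective h4).symm

lemma mem_orbit_of_GF (hd : 0 < d) (B M : ModVar K A d)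
    (hB : Module.finrank K (homSpace K A B B) = 1)
    (F G : Matrix (Fin d) (Fin d) K)
    (hF : ∀ a : A, F * B a = M a * F) (hG : ∀ a : A, G * M a = B a * G)
    (hGF : G * F ≠ 0) : M ∈ orbitSet K A B := by
  have hGFcomm : ∀ a : A, (G * F) * B a = B a * (G * F) := by
    intro a
    rw [mul_assoc, hF a, ← mul_assoc, hG a, mul_assoc]
  obtain ⟨c, hc⟩ := commuting_scalar hd B hB (G * F) hGFcomm
  have hc0 : c ≠ 0 := by
    intro h
    rw [h, zero_smul] at hc
    exact hGF hc
  have hleft : (c⁻¹ • G) * F = 1 := by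
    rw [Matrix.smul_mul, hc, smul_smul, inv_mul_cancel₀ hc0, one_smul]
  have hright : F * (c⁻¹ • G) = 1 := mul_eq_one_comm.1 hleft
  let u : (Matrix (Fin d) (Fin d) K)ˣ := ⟨F, c⁻¹ • G, hright, hleft⟩
  refine ⟨u⁻¹, fun a => ?_⟩
  have h1 : (↑(u⁻¹)⁻¹ : Matrix (Fin d) (Fin d) K) = F := by rw [inv_inv]
  rw [h1]
  calc M a = M a * (↑u * ↑u⁻¹) := by rw [Units.mul_inv, mul_one]
    _ = M a * F * ↑u⁻¹ := by rw [← mul_assoc]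
    _ = F * B a * ↑u⁻¹ := by rw [← hF a]

end PolyMem

section Orbit

variable {K A : Type} [Field K] [Ring A] [Algebra K A] {d : ℕ}

/-- Conjugated module structure. -/
def conjMod (B : ModVar K A d) (u : (Matrix (Fin d) (Fin d) K)ˣ) : ModVar K A d where
  toFun a := ↑u⁻¹ * B a * ↑u
  map_one' := by
    show (↑u⁻¹ : Matrix (Fin d) (Fin d) K) * B 1 * (↑u : Matrix (Fin d) (Fin d) K) = 1
    rw [map_one, mul_one, Units.inv_mul]
  map_mul' x y := by
    simp only [map_mul, mul_assoc, Units.mul_inv_cancel_left]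
  map_zero' := by
    show (↑u⁻¹ : Matrix (Fin d) (Fin d) K) * B 0 * (↑u : Matrix (Fin d) (Fin d) K) = 0
    rw [map_zero, mul_zero, zero_mul]
  map_add' x y := by
    show (↑u⁻¹ : Matrix (Fin d) (Fin d) K) * B (x + y) * (↑u : Matrix (Fin d) (Fin d) K) = (↑u⁻¹ : Matrix (Fin d) (Fin d) K) * B x * (↑u : Matrix (Fin d) (Fin d) K) + (↑u⁻¹ : Matrix (Fin d) (Fin d) K) * B y * (↑u : Matrix (Fin d) (Fin d) K)
    rw [map_add, mul_add, add_mul]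
  commutes' c := by
    show (↑u⁻¹ : Matrix (Fin d) (Fin d) K) * B (algebraMap K A c) * (↑u : Matrix (Fin d) (Fin d) K) = algebraMap K (Matrix (Fin d) (Fin d) K) c
    rw [AlgHom.commutes, mul_assoc, Algebra.commutes c ((↑u : Matrix (Fin d) (Fin d) K)),
      ← mul_assoc, Units.inv_mul, one_mul]

lemma conjMod_apply (B : ModVar K A d) (u : (Matrix (Fin d) (Fin d) K)ˣ) (a : A) :
    conjMod B u a = (↑u⁻¹ : Matrix (Fin d) (Fin d) K) * B a * (↑u : Matrix (Fin d) (Fin d) K) :=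
  rfl

lemma conjMod_mem_orbit (B : ModVar K A d) (u : (Matrix (Fin d) (Fin d) K)ˣ) :
    conjMod B u ∈ orbitSet K A B :=
  ⟨u, fun _ => rfl⟩

/-- a • B • b as a linear map in `a`. -/
def sandwich (B : ModVar K A d) (P Q : Matrix (Fin d) (Fin d) K) :
    A →ₗ[K] Matrix (Fin d) (Fin d) K :=
  (LinearMap.mulLeft K P) ∘ₗ (LinearMap.mulRight K Q) ∘ₗ B.toLinearMap

lemma sandwich_apply (B : ModVar K A d) (P Q : Matrix (Fin d) (Fin d) K) (a : A) :
    sandwich B P Q a = P * B a * Q := by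
  simp only [sandwich, LinearMap.comp_apply, LinearMap.mulLeft_apply,
    LinearMap.mulRight_apply, AlgHom.toLinearMap_apply, mul_assoc]

/-- Degree bound for a polynomial matrix. -/
noncomputable def polyDegBound (P : Matrix (Fin d) (Fin d) (Polynomial K)) : ℕ :=
  (Finset.univ.sup fun ij : Fin d × Fin d => (P ij.1 ij.2).natDegree) + 1

lemma matrix_poly_eval_decomp (P : Matrix (Fin d) (Fin d) (Polynomial K)) (t : K) :
    P.map (Polynomial.eval t)
      = ∑ k ∈ Finset.range (polyDegBound P), t ^ k • P.map (fun p => p.coeff k) := by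
  ext i j
  have hdeg : (P i j).natDegree < polyDegBound P := by
    have : (P i j).natDegree ≤ Finset.univ.sup
        fun ij : Fin d × Fin d => (P ij.1 ij.2).natDegree :=
      Finset.le_sup (f := fun ij : Fin d × Fin d => (P ij.1 ij.2).natDegree)
        (Finset.mem_univ (i, j))
    show (P i j).natDegree
      < (Finset.univ.sup fun ij : Fin d × Fin d => (P ij.1 ij.2).natDegree) + 1
    omega
  rw [Matrix.map_apply, Polynomial.eval_eq_sum_range' hdeg, Matrix.sum_apply]
  refine Finset.sum_congr rfl fun k _ => ?_
  rw [Matrix.smul_apply, Matrix.map_apply, smul_eq_mul, mul_comm]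

/-- The value of a polynomial function along the conjugation curve is a rational
function of the parameter. -/
lemma poly_on_curve [FiniteDimensional K A] (B : ModVar K A d)
    (G : Matrix (Fin d) (Fin d) (Polynomial K))
    (q : (A →ₗ[K] Matrix (Fin d) (Fin d) K) → K)
    (hq : q ∈ polyAlg K (A →ₗ[K] Matrix (Fin d) (Fin d) K)) :
    ∃ (m : ℕ) (Np : Polynomial K),
      ∀ t : K, Polynomial.eval t G.det ≠ 0 →
        q ((Polynomial.eval t G.det)⁻¹ •
            sandwich B ((G.map (Polynomial.eval t)).adjugate) (G.map (Polynomial.eval t)))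
          * (Polynomial.eval t G.det) ^ m = Polynomial.eval t Np := by
  set wcurve : K → (A →ₗ[K] Matrix (Fin d) (Fin d) K) := fun t =>
    (Polynomial.eval t G.det)⁻¹ •
      sandwich B ((G.map (Polynomial.eval t)).adjugate) (G.map (Polynomial.eval t)) with hwc
  induction hq using Algebra.adjoin_induction with
  | mem q hq =>
    obtain ⟨φ, rfl⟩ := hq
    refine ⟨1, ?_, ?_⟩
    case _ =>
      exact ∑ k ∈ Finset.range (polyDegBound (G.adjugate)), ∑ l ∈ Finset.range (polyDegBound G),
        Polynomial.C (φ (sandwich B (G.adjugate.map (fun p => p.coeff k))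
          (G.map (fun p => p.coeff l)))) * Polynomial.X ^ (k + l)
    intro t ht
    have hsm : φ (wcurve t) * Polynomial.eval t G.det = φ (sandwich B
        ((G.map (Polynomial.eval t)).adjugate) (G.map (Polynomial.eval t))) := by
      rw [hwc]
      rw [map_smul, smul_eq_mul]
      field_simp
    rw [pow_one, hsm]
    -- adjugate commutes with eval
    have hadj : (G.map (Polynomial.eval t)).adjugate = G.adjugate.map (Polynomial.eval t) := by
      have := RingHom.map_adjugate (Polynomial.evalRingHom t) G
      simp only [RingHom.mapMatrix_apply, Polynomial.coe_evalRingHom] at this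
      exact this.symm
    rw [hadj]
    rw [matrix_poly_eval_decomp G.adjugate t, matrix_poly_eval_decomp G t]
    have hbil : sandwich B
        (∑ k ∈ Finset.range (polyDegBound G.adjugate),
          t ^ k • G.adjugate.map (fun p => p.coeff k))
        (∑ l ∈ Finset.range (polyDegBound G), t ^ l • G.map (fun p => p.coeff l))
        = ∑ k ∈ Finset.range (polyDegBound G.adjugate), ∑ l ∈ Finset.range (polyDegBound G),
            (t ^ k * t ^ l) • sandwich B (G.adjugate.map (fun p => p.coeff k))
              (G.map (fun p => p.coeff l)) := by
      apply LinearMap.ext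
      intro a
      simp only [sandwich_apply, LinearMap.sum_apply, LinearMap.smul_apply, sandwich_apply,
        Finset.sum_mul, Finset.mul_sum, Matrix.smul_mul, Matrix.mul_smul, smul_smul]
      rw [Finset.sum_comm]
      refine Finset.sum_congr rfl fun k _ => Finset.sum_congr rfl fun l _ => ?_
      rw [mul_comm (t ^ l) (t ^ k)]
    rw [hbil, map_sum]
    rw [Polynomial.eval_finset_sum]
    refine Finset.sum_congr rfl fun k _ => ?_
    rw [map_sum, Polynomial.eval_finset_sum]
    refine Finset.sum_congr rfl fun l _ => ?_
    rw [map_smul, smul_eq_mul, Polynomial.eval_mul, Polynomial.eval_C, Polynomial.eval_pow,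
      Polynomial.eval_X, pow_add]
    ring
  | algebraMap r =>
    refine ⟨0, Polynomial.C r, fun t ht => ?_⟩
    rw [pow_zero, mul_one, Polynomial.eval_C]
    rfl
  | add q₁ q₂ hq₁ hq₂ ih₁ ih₂ =>
    obtain ⟨m₁, N₁, h₁⟩ := ih₁
    obtain ⟨m₂, N₂, h₂⟩ := ih₂
    refine ⟨m₁ + m₂, N₁ * G.det ^ m₂ + N₂ * G.det ^ m₁, fun t ht => ?_⟩
    have e₁ := h₁ t ht
    have e₂ := h₂ t ht
    rw [Polynomial.eval_add, Polynomial.eval_mul, Polynomial.eval_mul, Polynomial.eval_pow,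
      Polynomial.eval_pow, ← e₁, ← e₂]
    show ((q₁ + q₂) (wcurve t)) * _ = _
    rw [Pi.add_apply]
    ring
  | mul q₁ q₂ hq₁ hq₂ ih₁ ih₂ =>
    obtain ⟨m₁, N₁, h₁⟩ := ih₁
    obtain ⟨m₂, N₂, h₂⟩ := ih₂
    refine ⟨m₁ + m₂, N₁ * N₂, fun t ht => ?_⟩
    have e₁ := h₁ t ht
    have e₂ := h₂ t ht
    rw [Polynomial.eval_mul, ← e₁, ← e₂]
    show ((q₁ * q₂) (wcurve t)) * _ = _
    rw [Pi.mul_apply]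
    ring

end Orbit

noncomputable def unitOfDetNeZero {K : Type} [Field K] {d : ℕ}
    (M : Matrix (Fin d) (Fin d) K) (h : M.det ≠ 0) : (Matrix (Fin d) (Fin d) K)ˣ :=
  ⟨M, M⁻¹, Matrix.mul_nonsing_inv M h.isUnit, Matrix.nonsing_inv_mul M h.isUnit⟩

section OrbitIrr

variable {K A : Type} [Field K] [Ring A] [Algebra K A] {d : ℕ}

lemma conjMod_toLinearMap_eq (B : ModVar K A d) (M : Matrix (Fin d) (Fin d) K)
    (h : M.det ≠ 0) :
    (conjMod B (unitOfDetNeZero M h)).toLinearMap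
      = (M.det)⁻¹ • sandwich B M.adjugate M := by
  apply LinearMap.ext
  intro a
  rw [AlgHom.toLinearMap_apply, conjMod_apply]
  have hinv : (↑(unitOfDetNeZero M h)⁻¹ : Matrix (Fin d) (Fin d) K) = M⁻¹ := rfl
  have hval : (↑(unitOfDetNeZero M h) : Matrix (Fin d) (Fin d) K) = M := rfl
  rw [hinv, hval, Matrix.inv_def, Ring.inverse_eq_inv]
  rw [Matrix.smul_mul, Matrix.smul_mul, LinearMap.smul_apply, sandwich_apply]

lemma orbit_isPreirreducible [Infinite K] [FiniteDimensional K A] (B : ModVar K A d) :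
    IsPreirreducible (orbitSet K A B) := by
  classical
  intro U₁ U₂ hU₁ hU₂ h₁ h₂
  obtain ⟨M₁, hM₁o, hM₁U⟩ := h₁
  obtain ⟨M₂, hM₂o, hM₂U⟩ := h₂
  obtain ⟨g₁, hg₁⟩ := hM₁o
  obtain ⟨g₂, hg₂⟩ := hM₂o
  -- opens come from the Zariski topology on the linear-map space
  obtain ⟨O₁, hO₁, hpre₁⟩ := (isOpen_induced_iff
    (t := zariskiTopology K (A →ₗ[K] Matrix (Fin d) (Fin d) K))).1 hU₁
  obtain ⟨O₂, hO₂, hpre₂⟩ := (isOpen_induced_iff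
    (t := zariskiTopology K (A →ₗ[K] Matrix (Fin d) (Fin d) K))).1 hU₂
  have hw₁mem : M₁.toLinearMap ∈ O₁ := by
    rw [← hpre₁] at hM₁U; exact hM₁U
  have hw₂mem : M₂.toLinearMap ∈ O₂ := by
    rw [← hpre₂] at hM₂U; exact hM₂U
  obtain ⟨s₁, F₁, hs₁, himp₁⟩ := mem_open_iff_finite_conditions hO₁ hw₁mem
  obtain ⟨s₂, F₂, hs₂, himp₂⟩ := mem_open_iff_finite_conditions hO₂ hw₂mem
  -- the conjugation curve
  set Gm : Matrix (Fin d) (Fin d) (Polynomial K) :=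
    ((↑g₂ : Matrix (Fin d) (Fin d) K)).map Polynomial.C
      + (Polynomial.X : Polynomial K) •
        ((↑g₁ - ↑g₂ : Matrix (Fin d) (Fin d) K)).map Polynomial.C with hGm
  set gc : K → Matrix (Fin d) (Fin d) K :=
    fun t => ↑g₂ + t • ((↑g₁ : Matrix (Fin d) (Fin d) K) - ↑g₂) with hgc
  have heval : ∀ t, Gm.map (Polynomial.eval t) = gc t := by
    intro t; ext i j
    simp [hGm, hgc, Matrix.map_apply, Matrix.add_apply, Matrix.smul_apply, smul_eq_mul]
  have hdet : ∀ t, (gc t).det = Polynomial.eval t Gm.det := by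
    intro t
    rw [← heval t]
    have h3 := RingHom.map_det (Polynomial.evalRingHom t) Gm
    simp only [RingHom.mapMatrix_apply, Polynomial.coe_evalRingHom] at h3
    exact h3.symm
  have hgc1 : gc 1 = ↑g₁ := by simp [hgc]
  have hgc0 : gc 0 = ↑g₂ := by simp [hgc]
  have hdet1 : Polynomial.eval 1 Gm.det ≠ 0 := by
    rw [← hdet 1, hgc1]
    exact ((Matrix.isUnit_iff_isUnit_det _).1 g₁.isUnit).ne_zero
  have hdet0 : Polynomial.eval 0 Gm.det ≠ 0 := by
    rw [← hdet 0, hgc0]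
    exact ((Matrix.isUnit_iff_isUnit_det _).1 g₂.isUnit).ne_zero
  have hGmdet_ne : Gm.det ≠ 0 := fun h0 => hdet1 (by rw [h0, Polynomial.eval_zero])
  -- the curve in the space of linear maps
  set wc : K → (A →ₗ[K] Matrix (Fin d) (Fin d) K) := fun t =>
    (Polynomial.eval t Gm.det)⁻¹ •
      sandwich B ((Gm.map (Polynomial.eval t)).adjugate) (Gm.map (Polynomial.eval t)) with hwc
  have hwc_eq : ∀ (t : K) (h : (gc t).det ≠ 0),
      (conjMod B (unitOfDetNeZero (gc t) h)).toLinearMap = wc t := by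
    intro t h
    rw [conjMod_toLinearMap_eq, hwc]
    rw [show gc t = Gm.map (Polynomial.eval t) from (heval t).symm]
    rw [show (Gm.map (Polynomial.eval t)).det = Polynomial.eval t Gm.det by
      rw [heval t]; exact hdet t]
  have hgdet1 : (gc 1).det ≠ 0 := by rw [hdet 1]; exact hdet1
  have hgdet0 : (gc 0).det ≠ 0 := by rw [hdet 0]; exact hdet0
  have hw1 : wc 1 = M₁.toLinearMap := by
    rw [← hwc_eq 1 hgdet1]
    have hMM : conjMod B (unitOfDetNeZero (gc 1) hgdet1) = M₁ := by
      apply AlgHom.ext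
      intro a
      rw [conjMod_apply, hg₁ a]
      have hval : (↑(unitOfDetNeZero (gc 1) hgdet1) : Matrix (Fin d) (Fin d) K) = ↑g₁ := hgc1
      have hinv : (↑(unitOfDetNeZero (gc 1) hgdet1)⁻¹ : Matrix (Fin d) (Fin d) K)
          = (↑g₁⁻¹ : Matrix (Fin d) (Fin d) K) := by
        show (gc 1)⁻¹ = _
        rw [hgc1]
        exact (Matrix.coe_units_inv g₁).symm
      rw [hval, hinv]
    rw [hMM]
  have hw0 : wc 0 = M₂.toLinearMap := by
    rw [← hwc_eq 0 hgdet0]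
    have hMM : conjMod B (unitOfDetNeZero (gc 0) hgdet0) = M₂ := by
      apply AlgHom.ext
      intro a
      rw [conjMod_apply, hg₂ a]
      have hval : (↑(unitOfDetNeZero (gc 0) hgdet0) : Matrix (Fin d) (Fin d) K) = ↑g₂ := hgc0
      have hinv : (↑(unitOfDetNeZero (gc 0) hgdet0)⁻¹ : Matrix (Fin d) (Fin d) K)
          = (↑g₂⁻¹ : Matrix (Fin d) (Fin d) K) := by
        show (gc 0)⁻¹ = _
        rw [hgc0]
        exact (Matrix.coe_units_inv g₂).symm
      rw [hval, hinv]
    rw [hMM]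
  -- rational expressions for the polynomial functions along the curve
  have hrat : ∀ σ : polyAlg K (A →ₗ[K] Matrix (Fin d) (Fin d) K),
      ∃ (m : ℕ) (Np : Polynomial K), ∀ t, Polynomial.eval t Gm.det ≠ 0 →
        (σ : (A →ₗ[K] Matrix (Fin d) (Fin d) K) → K) (wc t)
          * (Polynomial.eval t Gm.det) ^ m = Polynomial.eval t Np :=
    fun σ => poly_on_curve B Gm σ.1 σ.2
  choose mm NN hNN using hrat
  -- the bad parameter set is finite
  set P : (polyAlg K (A →ₗ[K] Matrix (Fin d) (Fin d) K)) → K → Polynomial K :=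
    fun σ c => NN σ - Polynomial.C c * Gm.det ^ mm σ with hP
  have hProot₁ : ∀ σ ∈ s₁, ∀ c ∈ F₁ σ, P σ c ≠ 0 := by
    intro σ hσ c hc h0
    have he := hNN σ 1 hdet1
    rw [hw1] at he
    have hz : Polynomial.eval 1 (P σ c) = 0 := by rw [h0, Polynomial.eval_zero]
    rw [hP] at hz
    simp only [Polynomial.eval_sub, Polynomial.eval_mul, Polynomial.eval_C,
      Polynomial.eval_pow] at hz
    rw [← he, ← sub_mul] at hz
    have hne : (σ : (A →ₗ[K] Matrix (Fin d) (Fin d) K) → K) M₁.toLinearMap ≠ c := by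
      intro hcc
      exact (hs₁ σ hσ).2 (hcc ▸ hc)
    rcases mul_eq_zero.1 hz with h | h
    · exact hne (sub_eq_zero.1 h)
    · exact pow_ne_zero _ hdet1 h
  have hProot₂ : ∀ σ ∈ s₂, ∀ c ∈ F₂ σ, P σ c ≠ 0 := by
    intro σ hσ c hc h0
    have he := hNN σ 0 hdet0
    rw [hw0] at he
    have hz : Polynomial.eval 0 (P σ c) = 0 := by rw [h0, Polynomial.eval_zero]
    rw [hP] at hz
    simp only [Polynomial.eval_sub, Polynomial.eval_mul, Polynomial.eval_C,
      Polynomial.eval_pow] at hz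
    rw [← he, ← sub_mul] at hz
    have hne : (σ : (A →ₗ[K] Matrix (Fin d) (Fin d) K) → K) M₂.toLinearMap ≠ c := by
      intro hcc
      exact (hs₂ σ hσ).2 (hcc ▸ hc)
    rcases mul_eq_zero.1 hz with h | h
    · exact hne (sub_eq_zero.1 h)
    · exact pow_ne_zero _ hdet0 h
  set Bad : Set K :=
    ({t | Polynomial.eval t Gm.det = 0}
    ∪ ⋃ σ ∈ s₁, ⋃ c ∈ F₁ σ, {t | Polynomial.eval t (P σ c) = 0})
    ∪ ⋃ σ ∈ s₂, ⋃ c ∈ F₂ σ, {t | Polynomial.eval t (P σ c) = 0} with hBad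
  have hBadFin : Bad.Finite := by
    refine Set.Finite.union (Set.Finite.union ?_ ?_) ?_
    · exact Polynomial.finite_setOf_isRoot hGmdet_ne
    · refine Set.Finite.biUnion s₁.finite_toSet fun σ hσ => ?_
      refine Set.Finite.biUnion (hs₁ σ hσ).1 fun c hc => ?_
      exact Polynomial.finite_setOf_isRoot (hProot₁ σ hσ c hc)
    · refine Set.Finite.biUnion s₂.finite_toSet fun σ hσ => ?_
      refine Set.Finite.biUnion (hs₂ σ hσ).1 fun c hc => ?_
      exact Polynomial.finite_setOf_isRoot (hProot₂ σ hσ c hc)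
  obtain ⟨t, ht⟩ := hBadFin.infinite_compl.nonempty
  have hδt : Polynomial.eval t Gm.det ≠ 0 := by
    intro h0
    exact ht (Set.mem_union_left _ (Set.mem_union_left _ h0))
  have hcond₁ : ∀ σ ∈ s₁, (σ : (A →ₗ[K] Matrix (Fin d) (Fin d) K) → K) (wc t) ∉ F₁ σ := by
    intro σ hσ hcmem
    apply ht
    refine Set.mem_union_left _ (Set.mem_union_right _ ?_)
    refine Set.mem_biUnion hσ (Set.mem_biUnion hcmem ?_)
    show Polynomial.eval t (P σ ((σ : (A →ₗ[K] Matrix (Fin d) (Fin d) K) → K) (wc t))) = 0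
    rw [hP]
    simp only [Polynomial.eval_sub, Polynomial.eval_mul, Polynomial.eval_C,
      Polynomial.eval_pow]
    rw [← hNN σ t hδt]
    exact sub_self _
  have hcond₂ : ∀ σ ∈ s₂, (σ : (A →ₗ[K] Matrix (Fin d) (Fin d) K) → K) (wc t) ∉ F₂ σ := by
    intro σ hσ hcmem
    apply ht
    refine Set.mem_union_right _ ?_
    refine Set.mem_biUnion hσ (Set.mem_biUnion hcmem ?_)
    show Polynomial.eval t (P σ ((σ : (A →ₗ[K] Matrix (Fin d) (Fin d) K) → K) (wc t))) = 0
    rw [hP]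
    simp only [Polynomial.eval_sub, Polynomial.eval_mul, Polynomial.eval_C,
      Polynomial.eval_pow]
    rw [← hNN σ t hδt]
    exact sub_self _
  have hwcO₁ : wc t ∈ O₁ := himp₁ _ hcond₁
  have hwcO₂ : wc t ∈ O₂ := himp₂ _ hcond₂
  have hgdet_t : (gc t).det ≠ 0 := by rw [hdet t]; exact hδt
  refine ⟨conjMod B (unitOfDetNeZero (gc t) hgdet_t), conjMod_mem_orbit B _, ?_, ?_⟩
  · rw [← hpre₁]
    show (conjMod B (unitOfDetNeZero (gc t) hgdet_t)).toLinearMap ∈ O₁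
    rw [hwc_eq t hgdet_t]
    exact hwcO₁
  · rw [← hpre₂]
    show (conjMod B (unitOfDetNeZero (gc t) hgdet_t)).toLinearMap ∈ O₂
    rw [hwc_eq t hgdet_t]
    exact hwcO₂

end OrbitIrr

end BrickAux

open BrickAux in
/-- Let `A` be a finite-dimensional algebra over an algebraically closed field
`K` and `Z` an irreducible component of `mod(A,d)` which is a brick component
(the generic, i.e. minimal, value of `M ↦ dim End_A(M)` on `Z` is `1`) and does
not contain a dense orbit.  Then the generic (minimal) value of
`(M,M') ↦ dim Hom_A(M,M')` on `Z × Z` is `0`. -/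
theorem hom_eq_zero_of_brick_component [IsAlgClosed K] [FiniteDimensional K A]
    (d : ℕ) (Z : Set (ModVar K A d)) (hZ : Z ∈ irreducibleComponents (ModVar K A d))
    (hbrick : sInf {k : ℕ | ∃ M ∈ Z, k = Module.finrank K (homSpace K A M M)} = 1)
    (hnodense : ¬ ∃ M ∈ Z, closure (orbitSet K A M) = Z) :
    sInf {k : ℕ | ∃ M ∈ Z, ∃ M' ∈ Z, k = Module.finrank K (homSpace K A M M')} = 0 := by
  classical
  rw [Nat.sInf_eq_zero]
  left
  by_contra h0
  have hpairs : ∀ M ∈ Z, ∀ M' ∈ Z, Module.finrank K (homSpace K A M M') ≠ 0 := by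
    intro M hM M' hM' hzero
    exact h0 ⟨M, hM, M', hM', hzero.symm⟩
  -- get a brick B ∈ Z
  have hTne : {k : ℕ | ∃ M ∈ Z, k = Module.finrank K (homSpace K A M M)}.Nonempty := by
    by_contra hne
    rw [Set.not_nonempty_iff_eq_empty] at hne
    rw [hne, Nat.sInf_empty] at hbrick
    exact absurd hbrick (by omega)
  have hmem := Nat.sInf_mem hTne
  rw [hbrick] at hmem
  obtain ⟨B, hBZ, hB1⟩ := hmem
  have hB1' : Module.finrank K (homSpace K A B B) = 1 := hB1.symm
  -- d is positive
  have hd : 0 < d := by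
    rcases Nat.eq_zero_or_pos d with hd0 | hd0
    · exfalso
      subst hd0
      have hsub : Subsingleton ((Fin 0 → K) →ₗ[K] (Fin 0 → K)) := inferInstance
      have h1 : Module.finrank K (homSpace K A B B) ≤
          Module.finrank K ((Fin 0 → K) →ₗ[K] (Fin 0 → K)) := Submodule.finrank_le _
      have h2 : Module.finrank K ((Fin 0 → K) →ₗ[K] (Fin 0 → K)) = 0 :=
        Module.finrank_zero_of_subsingleton
      rw [h2] at h1
      omega
    · exact hd0
  set e : ℕ := d * d - 1 with hedef
  have he : d * d = e + 1 := by
    have h1 : 1 ≤ d * d := Nat.one_le_iff_ne_zero.2 (Nat.mul_ne_zero hd.ne' hd.ne')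
    omega
  -- the brick kernel has dimension 1, rank of its matrix is e
  have hBfin : Module.finrank K
      (LinearMap.ker (TT he B.toLinearMap B.toLinearMap)) = 1 := by
    rw [← homSpace_finrank_eq he B B]; exact hB1'
  have hBrank : (QQ he B.toLinearMap B.toLinearMap).rank = e :=
    QQ_rank he _ _ hBfin
  obtain ⟨r, j₀, hrj⟩ := exists_cofVec_ne_zero (QQ he B.toLinearMap B.toLinearMap) hBrank
  -- nonzero kernel elements at each pair of points of Z
  have hker_ne : ∀ (L R : ModVar K A d), L ∈ Z → R ∈ Z →
      ∃ x : Fin (e+1) → K, x ≠ 0 ∧ (QQ he L.toLinearMap R.toLinearMap).mulVec x = 0 := by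
    intro L R hL hR
    have h1 : Module.finrank K (LinearMap.ker (TT he L.toLinearMap R.toLinearMap)) ≠ 0 := by
      rw [← homSpace_finrank_eq he L R]
      exact hpairs L hL R hR
    have h2 : LinearMap.ker (TT he L.toLinearMap R.toLinearMap) ≠ ⊥ := by
      intro hbot
      rw [hbot] at h1
      simp at h1
    obtain ⟨x, hx, hx0⟩ := Submodule.ne_bot_iff _ |>.1 h2
    refine ⟨x, hx0, ?_⟩
    rw [QQ_mulVec]
    exact hx
  -- matrix intertwiners from cofactor vectors
  have hFM : ∀ M : ModVar K A d, M ∈ Z → ∀ a : A,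
      unvecL he (cofVec (QQ he B.toLinearMap M.toLinearMap) r) * B a
        = M a * unvecL he (cofVec (QQ he B.toLinearMap M.toLinearMap) r) := by
    intro M hM
    have h1 := mulVec_cofVec_eq_zero (QQ he B.toLinearMap M.toLinearMap) r
      (hker_ne B M hBZ hM)
    rw [QQ_mulVec] at h1
    have h2 := (TT_eq_zero_iff he B.toLinearMap M.toLinearMap _).1 h1
    intro a
    have := h2 a
    simpa [AlgHom.toLinearMap_apply] using this
  have hGM : ∀ M : ModVar K A d, M ∈ Z → ∀ a : A,
      unvecL he (cofVec (QQ he M.toLinearMap B.toLinearMap) r) * M a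
        = B a * unvecL he (cofVec (QQ he M.toLinearMap B.toLinearMap) r) := by
    intro M hM
    have h1 := mulVec_cofVec_eq_zero (QQ he M.toLinearMap B.toLinearMap) r
      (hker_ne M B hM hBZ)
    rw [QQ_mulVec] at h1
    have h2 := (TT_eq_zero_iff he M.toLinearMap B.toLinearMap _).1 h1
    intro a
    have := h2 a
    simpa [AlgHom.toLinearMap_apply] using this
  -- the closed set Y
  set pfun : Fin d → Fin d → ((A →ₗ[K] Matrix (Fin d) (Fin d) K) → K) := fun s t =>
    fun w => ∑ u, (unvecL he (cofVec (QQ he w B.toLinearMap) r)) s u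
      * (unvecL he (cofVec (QQ he B.toLinearMap w) r)) u t with hpfun
  have hpfun_mem : ∀ s t, pfun s t ∈ polyAlg K (A →ₗ[K] Matrix (Fin d) (Fin d) K) := by
    intro s t
    have hcl : ∀ j : Fin (e+1), (fun w : A →ₗ[K] Matrix (Fin d) (Fin d) K =>
        cofVec (QQ he B.toLinearMap w) r j)
        ∈ polyAlg K (A →ₗ[K] Matrix (Fin d) (Fin d) K) := by
      intro j
      exact cof_mem (fun p q => fun w => QQ he B.toLinearMap w p q)
        (fun p q => QQ_left_entry_mem he B p q) r j
    have hcr : ∀ j : Fin (e+1), (fun w : A →ₗ[K] Matrix (Fin d) (Fin d) K =>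
        cofVec (QQ he w B.toLinearMap) r j)
        ∈ polyAlg K (A →ₗ[K] Matrix (Fin d) (Fin d) K) := by
      intro j
      exact cof_mem (fun p q => fun w => QQ he w B.toLinearMap p q)
        (fun p q => QQ_right_entry_mem he B p q) r j
    have hsplit : pfun s t = ∑ u : Fin d,
        (fun w : A →ₗ[K] Matrix (Fin d) (Fin d) K =>
          cofVec (QQ he w B.toLinearMap) r (finCongr he (finProdFinEquiv (s, u))))
        * (fun w : A →ₗ[K] Matrix (Fin d) (Fin d) K =>
          cofVec (QQ he B.toLinearMap w) r (finCongr he (finProdFinEquiv (u, t)))) := by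
      funext w
      rw [hpfun]
      rw [Finset.sum_apply]
      rfl
    rw [hsplit]
    exact Subalgebra.sum_mem _ fun u _ => Subalgebra.mul_mem _ (hcr _) (hcl _)
  set Yhat : Set (A →ₗ[K] Matrix (Fin d) (Fin d) K) :=
    ⋂ s : Fin d, ⋂ t : Fin d, {w | pfun s t w = 0} with hYhat
  have hYhat_closed : IsClosed[zariskiTopology K (A →ₗ[K] Matrix (Fin d) (Fin d) K)] Yhat := by
    letI := zariskiTopology K (A →ₗ[K] Matrix (Fin d) (Fin d) K)
    refine isClosed_iInter fun s => isClosed_iInter fun t => ?_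
    exact isClosed_zero_set (hpfun_mem s t)
  set Yset : Set (ModVar K A d) :=
    (fun M : ModVar K A d => M.toLinearMap) ⁻¹' Yhat with hYset
  have hYset_closed : IsClosed Yset := by
    letI := zariskiTopology K (A →ₗ[K] Matrix (Fin d) (Fin d) K)
    exact IsClosed.preimage continuous_induced_dom hYhat_closed
  -- Z is covered by Yset and the orbit of B
  have hcover : Z ⊆ Yset ∪ orbitSet K A B := by
    intro M hM
    by_cases horb : M ∈ orbitSet K A B
    · exact Or.inr horb
    · refine Or.inl ?_
      have hGF0 : unvecL he (cofVec (QQ he M.toLinearMap B.toLinearMap) r)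
          * unvecL he (cofVec (QQ he B.toLinearMap M.toLinearMap) r) = 0 := by
        by_contra hne
        exact horb (mem_orbit_of_GF hd B M hB1' _ _ (hFM M hM) (hGM M hM) hne)
      refine Set.mem_iInter.2 fun s => Set.mem_iInter.2 fun t => ?_
      show pfun s t M.toLinearMap = 0
      rw [hpfun]
      have : (unvecL he (cofVec (QQ he M.toLinearMap B.toLinearMap) r)
          * unvecL he (cofVec (QQ he B.toLinearMap M.toLinearMap) r)) s t = 0 := by
        rw [hGF0]; rfl
      rw [← this, Matrix.mul_apply]
  -- B is not in Yset
  have hBY : B ∉ Yset := by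
    intro hBmem
    set S : Matrix (Fin d) (Fin d) K :=
      unvecL he (cofVec (QQ he B.toLinearMap B.toLinearMap) r) with hS
    have hS0 : S ≠ 0 := by
      intro hzero
      apply hrj
      have : S (finProdFinEquiv.symm ((finCongr he).symm j₀)).1
          (finProdFinEquiv.symm ((finCongr he).symm j₀)).2 = 0 := by rw [hzero]; rfl
      rw [hS] at this
      show cofVec (QQ he B.toLinearMap B.toLinearMap) r j₀ = 0
      rw [← this]
      show _ = cofVec (QQ he B.toLinearMap B.toLinearMap) r
        (finCongr he (finProdFinEquiv ((finProdFinEquiv.symm ((finCongr he).symm j₀)).1,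
          (finProdFinEquiv.symm ((finCongr he).symm j₀)).2)))
      rw [Prod.mk.eta, Equiv.apply_symm_apply, Equiv.apply_symm_apply]
    obtain ⟨c, hc⟩ := commuting_scalar hd B hB1' S (hFM B hBZ)
    have hc0 : c ≠ 0 := by
      intro h
      rw [h, zero_smul] at hc
      exact hS0 hc
    have hdiag := Set.mem_iInter.1 (Set.mem_iInter.1 hBmem ⟨0, hd⟩) ⟨0, hd⟩
    have hvalue : pfun ⟨0, hd⟩ ⟨0, hd⟩ B.toLinearMap = (S * S) ⟨0, hd⟩ ⟨0, hd⟩ := by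
      rw [hpfun, Matrix.mul_apply]
    have : (S * S) ⟨0, hd⟩ ⟨0, hd⟩ = 0 := by
      rw [← hvalue]
      exact hdiag
    rw [hc] at this
    simp only [Matrix.smul_mul, Matrix.mul_smul, Matrix.one_mul, smul_smul,
      Matrix.smul_apply, Matrix.one_apply_eq, smul_eq_mul, mul_one] at this
    exact (mul_ne_zero hc0 hc0) this
  -- conclude by irreducibility and maximality
  have horb_B : B ∈ orbitSet K A B := by
    refine ⟨1, fun a => ?_⟩
    rw [inv_one, Units.val_one, one_mul, mul_one]
  have hirr_orb : IsIrreducible (orbitSet K A B) :=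
    ⟨⟨B, horb_B⟩, orbit_isPreirreducible B⟩
  have hZirr : IsIrreducible Z := hZ.1
  have hsplit := (isPreirreducible_iff_isClosed_union_isClosed.1 hZirr.2) Yset
    (closure (orbitSet K A B)) hYset_closed isClosed_closure
    (fun x hx => (hcover hx).imp id fun h => subset_closure h)
  rcases hsplit with hcase | hcase
  · exact hBY (hcase hBZ)
  · apply hnodense
    refine ⟨B, hBZ, ?_⟩
    have hmax := hZ.2 hirr_orb.closure hcase
    exact le_antisymm hmax hcase
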